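/- The derivative of the weighted variance along solutions satisfies (d/dt) ∑_i v_i (y_i - m)² = -∑_{i,j} v_i σ_{ij} (y_i - y_j)², where m = ∑_i v_i y_i is constant in time. -/

import Mathlib

open Matrix Finset

theorem weighted_variance_derivative (N : ℕ) (σ A : Matrix (Fin N) (Fin N) ℝ)
    (hσ : ∀ i j, i ≠ j → 0 ≤ σ i j)
    (hoff : ∀ i j, i ≠ j → A i j = σ i j)
    (hdiag : ∀ i, A i i = -∑ k ∈ Finset.univ.filter (fun k => k ≠ i), σ i k)
    (v : Fin N → ℝ) (hvpos : ∀ i, 0 < v i) (hvsum : ∑ i, v i = 1)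
    (hv : Aᵀ.mulVec v = 0)
    (y : ℝ → Fin N → ℝ)
    (hy : ∀ t : ℝ, HasDerivAt y (A.mulVec (y t)) t)
    (m : ℝ) (hm : m = ∑ i, v i * y 0 i) :
    (∀ t : ℝ, ∑ i, v i * y t i = m) ∧
    (∀ t : ℝ, HasDerivAt (fun s => ∑ i, v i * (y s i - m) ^ 2)
      (-∑ i, ∑ j, v i * σ i j * (y t i - y t j) ^ 2) t) := by
  classical
  have hyi : ∀ (t : ℝ) (i : Fin N), HasDerivAt (fun s => y s i) (A.mulVec (y t) i) t := by
    intro t i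
    exact hasDerivAt_pi.mp (hy t) i
  -- row sums of A vanish
  have hrowA : ∀ i, ∑ j, A i j = 0 := by
    intro i
    have h1 : ∑ j, A i j = A i i + ∑ j ∈ univ.erase i, A i j :=
      (Finset.add_sum_erase univ (A i) (mem_univ i)).symm
    have h2 : ∑ j ∈ univ.erase i, A i j = ∑ j ∈ univ.erase i, σ i j :=
      Finset.sum_congr rfl fun j hj => hoff i j (Finset.ne_of_mem_erase hj).symm
    rw [h1, h2, hdiag i, Finset.filter_ne', neg_add_cancel]
  -- column sums against v
  have hvA : ∀ j, ∑ i, v i * A i j = 0 := by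
    intro j
    have h := congrFun hv j
    simp only [Matrix.mulVec, dotProduct, Matrix.transpose_apply, Pi.zero_apply] at h
    rw [← h]
    exact Finset.sum_congr rfl fun i _ => mul_comm _ _
  have hcol : ∀ j, ∑ i, v i * σ i j = v j * ∑ k, σ j k := by
    intro j
    have h0 := hvA j
    have h1 : ∑ i, v i * A i j = v j * A j j + ∑ i ∈ univ.erase j, v i * σ i j := by
      rw [← Finset.add_sum_erase univ (fun i => v i * A i j) (mem_univ j)]
      congr 1
      exact Finset.sum_congr rfl fun i hi => by
        rw [hoff i j (Finset.ne_of_mem_erase hi)]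
    have h2 : ∑ i, v i * σ i j = v j * σ j j + ∑ i ∈ univ.erase j, v i * σ i j :=
      (Finset.add_sum_erase univ (fun i => v i * σ i j) (mem_univ j)).symm
    have h3 : v j * A j j = -(v j * ∑ k ∈ univ.erase j, σ j k) := by
      rw [hdiag j, Finset.filter_ne']; ring
    have h4 : ∑ k, σ j k = σ j j + ∑ k ∈ univ.erase j, σ j k :=
      (Finset.add_sum_erase univ (σ j) (mem_univ j)).symm
    have h5 : ∑ i ∈ univ.erase j, v i * σ i j = v j * ∑ k ∈ univ.erase j, σ j k := by
      rw [h1, h3] at h0; linarith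
    rw [h2, h5, h4]; ring
  -- mulVec in difference form
  have hw : ∀ (x : Fin N → ℝ) (i), A.mulVec x i = ∑ j, σ i j * (x j - x i) := by
    intro x i
    have hmv : A.mulVec x i = ∑ j, A i j * x j := rfl
    calc A.mulVec x i = ∑ j, A i j * x j := hmv
      _ = ∑ j, (A i j * (x j - x i) + A i j * x i) :=
          Finset.sum_congr rfl fun j _ => by ring
      _ = (∑ j, A i j * (x j - x i)) + (∑ j, A i j) * x i := by
          rw [Finset.sum_add_distrib, Finset.sum_mul]
      _ = ∑ j, A i j * (x j - x i) := by rw [hrowA i, zero_mul, add_zero]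
      _ = ∑ j, σ i j * (x j - x i) := by
          refine Finset.sum_congr rfl fun j _ => ?_
          rcases eq_or_ne i j with h | h
          · subst h; simp
          · rw [hoff i j h]
  -- v-weighted sum of mulVec vanishes
  have hvw : ∀ x : Fin N → ℝ, ∑ i, v i * A.mulVec x i = 0 := by
    intro x
    calc ∑ i, v i * A.mulVec x i = ∑ i, ∑ j, v i * A i j * x j := by
          refine Finset.sum_congr rfl fun i _ => ?_
          rw [show A.mulVec x i = ∑ j, A i j * x j from rfl, Finset.mul_sum]
          exact Finset.sum_congr rfl fun j _ => by ring
      _ = ∑ j, ∑ i, v i * A i j * x j := Finset.sum_comm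
      _ = ∑ j, (∑ i, v i * A i j) * x j :=
          Finset.sum_congr rfl fun j _ => (Finset.sum_mul _ _ _).symm
      _ = 0 := by simp [hvA]
  -- part 1: constancy
  have hf : ∀ t : ℝ, HasDerivAt (fun s => ∑ i, v i * y s i) 0 t := by
    intro t
    have h := HasDerivAt.fun_sum (fun i (_ : i ∈ (univ : Finset (Fin N))) =>
      (hyi t i).const_mul (v i))
    simpa [hvw (y t)] using h
  have hconst : ∀ t : ℝ, ∑ i, v i * y t i = m := by
    intro t
    rw [hm]
    exact is_const_of_deriv_eq_zero (fun s => (hf s).differentiableAt)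
      (fun s => (hf s).deriv) t 0
  refine ⟨hconst, fun t => ?_⟩
  -- derivative of the variance
  have hD : HasDerivAt (fun s => ∑ i, v i * (y s i - m) ^ 2)
      (∑ i, v i * (2 * (y t i - m) * A.mulVec (y t) i)) t := by
    apply HasDerivAt.fun_sum
    intro i _
    have h := (((hyi t i).sub_const m).fun_pow 2).const_mul (v i)
    refine h.congr_deriv ?_
    norm_num
  -- algebraic identity
  have hS3 : (∑ i, ∑ j, v i * σ i j * y t j ^ 2) = ∑ i, ∑ j, v i * σ i j * y t i ^ 2 := by
    rw [Finset.sum_comm]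
    refine Finset.sum_congr rfl fun j _ => ?_
    calc ∑ i, v i * σ i j * y t j ^ 2 = (∑ i, v i * σ i j) * y t j ^ 2 :=
          (Finset.sum_mul _ _ _).symm
      _ = v j * (∑ k, σ j k) * y t j ^ 2 := by rw [hcol j]
      _ = ∑ k, v j * σ j k * y t j ^ 2 := by
          rw [Finset.mul_sum, Finset.sum_mul]
  have hE : (∑ i, ∑ j, v i * σ i j * (y t i - y t j) ^ 2)
      = 2 * (∑ i, ∑ j, v i * σ i j * y t i ^ 2)
        - 2 * (∑ i, ∑ j, v i * σ i j * (y t i * y t j)) := by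
    have hsplit : ∀ i : Fin N, ∑ j, v i * σ i j * (y t i - y t j) ^ 2
        = (∑ j, v i * σ i j * y t i ^ 2) - (∑ j, 2 * (v i * σ i j * (y t i * y t j)))
          + (∑ j, v i * σ i j * y t j ^ 2) := by
      intro i
      rw [← Finset.sum_sub_distrib, ← Finset.sum_add_distrib]
      exact Finset.sum_congr rfl fun j _ => by ring
    calc ∑ i, ∑ j, v i * σ i j * (y t i - y t j) ^ 2
        = (∑ i, ∑ j, v i * σ i j * y t i ^ 2)
          - (∑ i, ∑ j, 2 * (v i * σ i j * (y t i * y t j)))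
          + (∑ i, ∑ j, v i * σ i j * y t j ^ 2) := by
          rw [← Finset.sum_sub_distrib, ← Finset.sum_add_distrib]
          exact Finset.sum_congr rfl fun i _ => hsplit i
      _ = (∑ i, ∑ j, v i * σ i j * y t i ^ 2)
          - 2 * (∑ i, ∑ j, v i * σ i j * (y t i * y t j))
          + (∑ i, ∑ j, v i * σ i j * y t i ^ 2) := by
          rw [hS3]
          congr 2
          rw [Finset.mul_sum]
          exact Finset.sum_congr rfl fun i _ => (Finset.mul_sum _ _ _).symm
      _ = _ := by ring
  have hD2 : ∑ i, v i * y t i * A.mulVec (y t) i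
      = (∑ i, ∑ j, v i * σ i j * (y t i * y t j))
        - ∑ i, ∑ j, v i * σ i j * y t i ^ 2 := by
    rw [← Finset.sum_sub_distrib]
    refine Finset.sum_congr rfl fun i _ => ?_
    rw [hw (y t) i, Finset.mul_sum, ← Finset.sum_sub_distrib]
    exact Finset.sum_congr rfl fun j _ => by ring
  have hkey : ∑ i, v i * (2 * (y t i - m) * A.mulVec (y t) i)
      = -∑ i, ∑ j, v i * σ i j * (y t i - y t j) ^ 2 := by
    have expand : ∑ i, v i * (2 * (y t i - m) * A.mulVec (y t) i)
        = 2 * (∑ i, v i * y t i * A.mulVec (y t) i)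
          - 2 * m * (∑ i, v i * A.mulVec (y t) i) := by
      rw [Finset.mul_sum, Finset.mul_sum, ← Finset.sum_sub_distrib]
      exact Finset.sum_congr rfl fun i _ => by ring
    rw [expand, hD2, hvw (y t), hE]
    ring
  exact hkey ▸ hD
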